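/- Let B ⊆ ℝⁿ be a Lebesgue-measurable set with m(B) > 0 and let D ⊆ ℝⁿ be a closed set with B ∩ D = ∅. Then there exist a point x ∈ B and r > 0 such that the set B' = B ∩ B(x, r) satisfies m(B') > 0 and cessco(B') ∩ D = ∅, where B(x, r) is the open ball of radius r around x. -/
import Mathlib


open MeasureTheory Filter Set
open scoped RealInnerProductSpace Topology

noncomputable section

/-- The closed half-space `H_{ρ,t} = {x ∈ ℝⁿ : x·ρ ≤ t}`. -/
def halfSpace {n : ℕ} (ρ : EuclideanSpace ℝ (Fin n)) (t : ℝ) :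
    Set (EuclideanSpace ℝ (Fin n)) :=
  {x | ⟪x, ρ⟫ ≤ t}

/-- The closed essential convex hull of a set `A ⊆ ℝⁿ`: the intersection of all closed
half-spaces `H_{ρ,t}` such that `m(A \ H_{ρ,t}) = 0`. -/
def cessco {n : ℕ} (A : Set (EuclideanSpace ℝ (Fin n))) :
    Set (EuclideanSpace ℝ (Fin n)) :=
  ⋂ ρ : EuclideanSpace ℝ (Fin n), ⋂ t : ℝ,
    ⋂ _ : volume (A \ halfSpace ρ t) = 0, halfSpace ρ t

/-- If `B` has positive measure and is disjoint from the closed set `D`, then there is a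
point `x ∈ B` and `r > 0` such that `B' = B ∩ B(x,r)` has positive measure and
`cessco B'` is disjoint from `D`. -/
theorem exists_ball_cessco_disjoint {n : ℕ} (B : Set (EuclideanSpace ℝ (Fin n)))
    (hB : MeasurableSet B) (hm : 0 < volume B)
    (D : Set (EuclideanSpace ℝ (Fin n))) (hD : IsClosed D) (hBD : B ∩ D = ∅) :
    ∃ x ∈ B, ∃ r : ℝ, 0 < r ∧
      0 < volume (B ∩ Metric.ball x r) ∧
      cessco (B ∩ Metric.ball x r) ∩ D = ∅ := by
  classical
  -- find a point x ∈ B all of whose neighborhoods meet B in positive measure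
  have hae := Measure.everywherePosSubset_ae_eq (μ := volume) hB
  have hpos : 0 < volume (volume.everywherePosSubset B) := by
    rwa [hae.measure_eq]
  obtain ⟨x, hxB, hx⟩ : ∃ x, x ∈ B ∧ ∀ n ∈ 𝓝[B] x, 0 < volume n := by
    rcases nonempty_of_measure_ne_zero hpos.ne' with ⟨x, hx⟩
    exact ⟨x, hx.1, hx.2⟩
  have hball : ∀ r : ℝ, 0 < r → 0 < volume (B ∩ Metric.ball x r) := by
    intro r hr
    exact hx _ (inter_mem_nhdsWithin _ (Metric.ball_mem_nhds x hr))
  -- cessco of a subset of a ball is contained in the closed ball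
  have key : ∀ r : ℝ, 0 < r → cessco (B ∩ Metric.ball x r) ⊆ Metric.closedBall x r := by
    intro r hr z hz
    by_contra hznot
    have hdist : r < dist z x := by simpa [Metric.mem_closedBall] using hznot
    set ρ : EuclideanSpace ℝ (Fin n) := z - x with hρ
    have hρnorm : ‖ρ‖ = dist z x := by rw [hρ, dist_eq_norm]
    set t : ℝ := ⟪x, ρ⟫ + r * ‖ρ‖ with ht
    have hsub : B ∩ Metric.ball x r ⊆ halfSpace ρ t := by
      intro y hy
      have hy' : dist y x < r := Metric.mem_ball.mp hy.2
      have : ⟪y, ρ⟫ = ⟪x, ρ⟫ + ⟪y - x, ρ⟫ := by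
        rw [inner_sub_left]; ring
      have hle : ⟪y - x, ρ⟫ ≤ r * ‖ρ‖ := by
        calc ⟪y - x, ρ⟫ ≤ ‖y - x‖ * ‖ρ‖ := real_inner_le_norm _ _
          _ ≤ r * ‖ρ‖ := by
              apply mul_le_mul_of_nonneg_right _ (norm_nonneg _)
              rw [← dist_eq_norm]; exact hy'.le
      simp only [halfSpace, mem_setOf_eq, this, ht]
      linarith
    have hnull : volume ((B ∩ Metric.ball x r) \ halfSpace ρ t) = 0 := by
      rw [diff_eq_empty.mpr hsub]; exact measure_empty
    have hzH : z ∈ halfSpace ρ t := by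
      have := mem_iInter.mp (mem_iInter.mp (mem_iInter.mp hz ρ) t) hnull
      exact this
    have hzval : ⟪z, ρ⟫ - ⟪x, ρ⟫ = ‖ρ‖ * ‖ρ‖ := by
      rw [← inner_sub_left, ← hρ]; exact real_inner_self_eq_norm_mul_norm ρ
    have : ⟪z, ρ⟫ > t := by
      rw [ht]
      have h0 : 0 < dist z x := lt_trans hr hdist
      rw [hρnorm] at hzval ⊢
      nlinarith
    exact absurd hzH (by simpa [halfSpace, not_le] using this)
  rcases eq_empty_or_nonempty D with hDe | hDne
  · exact ⟨x, hxB, 1, one_pos, hball 1 one_pos, by rw [hDe, inter_empty]⟩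
  · have hxD : x ∉ D := fun hxd => (eq_empty_iff_forall_notMem.mp hBD x) ⟨hxB, hxd⟩
    have hinf : 0 < Metric.infDist x D := (hD.notMem_iff_infDist_pos hDne).mp hxD
    set r : ℝ := Metric.infDist x D / 2 with hrdef
    have hr : 0 < r := by positivity
    refine ⟨x, hxB, r, hr, hball r hr, ?_⟩
    rw [eq_empty_iff_forall_notMem]
    rintro y ⟨hy1, hy2⟩
    have h1 : dist y x ≤ r := key r hr hy1
    have h2 : Metric.infDist x D ≤ dist x y := Metric.infDist_le_dist_of_mem hy2
    rw [dist_comm] at h1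
    linarith
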